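/- On a normal Noetherian integral scheme X, the set of affine trivial Weil divisors forms a subgroup of the group Div(X) of all Weil divisors, and this subgroup contains all principal divisors. -/

import Mathlib

open AlgebraicGeometry

/-- A prime divisor on a scheme: a maximal proper irreducible closed subset
(equivalently, for an irreducible Noetherian ambient scheme, an integral closed
subscheme of codimension one). -/
def IsPrimeDivisor (X : Scheme) (Z : Set X) : Prop :=
  IsClosed Z ∧ IsIrreducible Z ∧ Z ≠ Set.univ ∧
    ∀ Z' : Set X, IsClosed Z' → IsIrreducible Z' → Z ⊆ Z' → Z' = Z ∨ Z' = Set.univ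

/-- Weil divisors: the free abelian group on prime divisors. -/
abbrev WDiv (X : Scheme) := {Z : Set X // IsPrimeDivisor X Z} →₀ ℤ

/-- The support of a Weil divisor. -/
def wsupp {X : Scheme} (D : WDiv X) : Set X := ⋃ Z ∈ D.support, (Z : Set X)

/-- "The complement of the subset `S` is an affine open subscheme." -/
def AffCompl (X : Scheme) (S : Set X) : Prop :=
  ∃ U : X.Opens, (U : Set X) = Sᶜ ∧ IsAffineOpen U

section
variable {X : Scheme} [IrreducibleSpace X] (divFn : (X.functionField)ˣ → WDiv X)

/-- `D` is coaffine: every effective divisor linearly equivalent to `D` has affine complement. -/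
def Coaffine (D : WDiv X) : Prop :=
  ∀ E : WDiv X, 0 ≤ E → (∃ q : (X.functionField)ˣ, E = D + divFn q) →
    AffCompl X (wsupp E)

/-- `D` is principal (trivial in the divisor class group). -/
def PrincipalDiv (D : WDiv X) : Prop := ∃ q : (X.functionField)ˣ, D = divFn q

/-- `D` is strongly coaffine: every multiple `n • D` is coaffine or trivial (principal). -/
def StronglyCoaffine (D : WDiv X) : Prop :=
  ∀ n : ℤ, Coaffine divFn (n • D) ∨ PrincipalDiv divFn (n • D)

/-- `D` is affine trivial: adding `D` to any strongly coaffine divisor yields a strongly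
coaffine divisor. -/
def AffineTrivial (D : WDiv X) : Prop :=
  ∀ E : WDiv X, StronglyCoaffine divFn E → StronglyCoaffine divFn (D + E)

end

section Aux
variable {X : Scheme} [IrreducibleSpace X] {divFn : (X.functionField)ˣ → WDiv X}
  (hdiv : ∀ q q' : (X.functionField)ˣ, divFn (q * q') = divFn q + divFn q')
include hdiv

lemma divFn_one : divFn 1 = 0 := by
  have := hdiv 1 1
  rw [one_mul] at this
  exact (left_eq_add.mp this)

lemma divFn_inv (q : (X.functionField)ˣ) : divFn q⁻¹ = -divFn q := by
  have := hdiv q q⁻¹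
  rw [mul_inv_cancel, divFn_one hdiv] at this
  exact eq_neg_of_add_eq_zero_left ((add_comm _ _).trans this.symm)

lemma divFn_zpow (q : (X.functionField)ˣ) : ∀ n : ℤ, divFn (q ^ n) = n • divFn q := by
  have hnat : ∀ n : ℕ, divFn (q ^ n) = n • divFn q := by
    intro n
    induction n with
    | zero => simpa using divFn_one hdiv
    | succ k ih => rw [pow_succ, hdiv, ih, add_nsmul, one_nsmul]
  intro n
  cases n with
  | ofNat m => simpa using hnat m
  | negSucc m =>
    rw [zpow_negSucc, divFn_inv hdiv, hnat, Int.negSucc_eq, neg_smul]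
    norm_cast

omit hdiv in
lemma sc_neg {D : WDiv X} (h : StronglyCoaffine divFn D) :
    StronglyCoaffine divFn (-D) := by
  intro n
  have := h (-n)
  rwa [neg_smul, ← smul_neg] at this

lemma sc_add_div {E : WDiv X} (h : StronglyCoaffine divFn E) (q : (X.functionField)ˣ) :
    StronglyCoaffine divFn (divFn q + E) := by
  intro n
  have hrw : n • (divFn q + E) = divFn (q ^ n) + n • E := by
    rw [smul_add, divFn_zpow hdiv]
  rcases h n with hc | hp
  · left
    rw [hrw]
    intro F hF hex
    obtain ⟨r, hr⟩ := hex
    apply hc F hF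
    exact ⟨q ^ n * r, by rw [hdiv, hr]; abel⟩
  · right
    obtain ⟨r, hr⟩ := hp
    exact ⟨q ^ n * r, by rw [hrw, hdiv, ← hr]⟩

end Aux

/-- On a normal Noetherian integral scheme `X`, the affine trivial Weil
divisors form a subgroup of `Div X`, containing all principal divisors.  (`divFn` is the
divisor map of the function field, given as data compatible with multiplication.) -/
theorem stmt_3 (X : Scheme) [IsIntegral X] [IsNoetherian X]
    (hnormal : ∀ x : X, IsIntegrallyClosed (X.presheaf.stalk x))
    (divFn : (X.functionField)ˣ → WDiv X)
    (hdiv : ∀ q q' : (X.functionField)ˣ, divFn (q * q') = divFn q + divFn q') :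
    ∃ G : AddSubgroup (WDiv X),
      (G : Set (WDiv X)) = {D | AffineTrivial divFn D} ∧
      ∀ q : (X.functionField)ˣ, divFn q ∈ G := by
  refine ⟨{ carrier := {D | AffineTrivial divFn D}
            zero_mem' := by intro E hE; simpa using hE
            add_mem' := ?_
            neg_mem' := ?_ }, rfl, ?_⟩
  · intro D D' hD hD' E hE
    have := hD _ (hD' E hE)
    simpa [add_assoc] using this
  · intro D hD E hE
    have h1 : StronglyCoaffine divFn (D + -E) := hD _ (sc_neg hE)
    have h2 := sc_neg h1
    have h3 : -(D + -E) = -D + E := by abel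
    rwa [h3] at h2
  · intro q E hE
    exact sc_add_div hdiv hE q
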